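/- Excursion hitting-time bound: with A ⊔ B ⊔ C partitioning the state space, for a ∈ A: E^a(T_{B∪C}) ≤ E^a(T_C) ≤ E^a(T_{B∪C}) + ψ_a·(f_B + σ·f_A)/(1 − ψσ), where f_A = sup_{a∈A} E^a(T_{B∪C}), f_B = sup_{b∈B} E^b(T_{A∪C}), ψ = sup_{a∈A} P^a(T_B < T_C), σ = sup_{b∈B} P^b(T_A < T_C), assuming ψσ < 1. -/

import Mathlib

open MeasureTheory ProbabilityTheory
open scoped ENNReal

noncomputable section

/-- First hitting time of a set `A` by a path `p`, valued in `ℝ≥0∞` (`⊤` if never hit). -/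
def hitTime {V : Type*} (p : ℕ → V) (A : Set V) : ℝ≥0∞ :=
  ⨅ t ∈ {t : ℕ | p t ∈ A}, (t : ℝ≥0∞)

/-- Position at time `t` of the random walk started at `x` with steps `X j`. -/
def walk {Ω : Type*} (X : ℕ → Ω → ℤ × ℤ) (x : ℤ × ℤ) (t : ℕ) (ω : Ω) : ℤ × ℤ :=
  x + ∑ j ∈ Finset.range t, X j ω

/-- Expected hitting time of `D` starting from `x`: `E^x(T_D)`. -/
def expHit {Ω : Type*} [MeasurableSpace Ω] (P : Measure Ω) (X : ℕ → Ω → ℤ × ℤ)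
    (D : Set (ℤ × ℤ)) (x : ℤ × ℤ) : ℝ≥0∞ :=
  ∫⁻ ω, hitTime (fun t => walk X x t ω) D ∂P

/-- `ψ_x(D,C) = P^x(T_D < T_C)`. -/
def excPsi {Ω : Type*} [MeasurableSpace Ω] (P : Measure Ω) (X : ℕ → Ω → ℤ × ℤ)
    (D C : Set (ℤ × ℤ)) (x : ℤ × ℤ) : ℝ≥0∞ :=
  P {ω | hitTime (fun t => walk X x t ω) D < hitTime (fun t => walk X x t ω) C}

namespace HT
open scoped Classical
variable {V : Type*} {p : ℕ → V} {D D' : Set V}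

lemma hitTime_eq_dite (p : ℕ → V) (D : Set V) :
    hitTime p D = if h : ∃ t, p t ∈ D then ((Nat.find h : ℕ) : ℝ≥0∞) else ⊤ := by
  unfold hitTime
  split_ifs with h
  · refine le_antisymm ?_ (le_iInf₂ fun t ht => ?_)
    · exact iInf₂_le (Nat.find h) (Nat.find_spec h)
    exact_mod_cast Nat.cast_le.mpr (Nat.find_min' h ht)
  · rw [iInf_eq_top]
    intro t
    rw [iInf_eq_top]
    intro ht
    exact absurd ⟨t, ht⟩ h

lemma hitTime_le_of_mem {t : ℕ} (h : p t ∈ D) : hitTime p D ≤ t := by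
  unfold hitTime; exact iInf₂_le t h

lemma hitTime_cases (p : ℕ → V) (D : Set V) :
    hitTime p D = ⊤ ∨ ∃ m : ℕ, hitTime p D = m := by
  rw [hitTime_eq_dite]
  split_ifs with h
  · exact Or.inr ⟨_, rfl⟩
  · exact Or.inl rfl

lemma hitTime_eq_natCast_iff {t : ℕ} :
    hitTime p D = t ↔ p t ∈ D ∧ ∀ s < t, p s ∉ D := by
  rw [hitTime_eq_dite]
  split_ifs with h
  · rw [Nat.cast_inj]
    constructor
    · rintro rfl
      exact ⟨Nat.find_spec h, fun s hs => Nat.find_min h hs⟩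
    · rintro ⟨h1, h2⟩
      exact le_antisymm (Nat.find_min' h h1) (Nat.le_find_iff h t |>.mpr fun m hm hmem => h2 m hm hmem)
  · constructor
    · intro ht
      exact absurd ht (by simp)
    · rintro ⟨h1, _⟩
      exact absurd ⟨t, h1⟩ h

lemma lt_hitTime_iff {k : ℕ} :
    (k : ℝ≥0∞) < hitTime p D ↔ ∀ s ≤ k, p s ∉ D := by
  rw [hitTime_eq_dite]
  split_ifs with h
  · rw [Nat.cast_lt]
    constructor
    · intro hk s hs hmem
      exact absurd (Nat.find_min' h hmem) (by omega)
    · intro hall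
      by_contra hle
      push_neg at hle
      exact hall _ hle (Nat.find_spec h)
  · constructor
    · intro _ s _ hmem
      exact h ⟨s, hmem⟩
    · intro _
      exact lt_of_le_of_ne le_top (ENNReal.natCast_ne_top k)

lemma hitTime_zero (h : p 0 ∈ D) : hitTime p D = 0 :=
  le_antisymm (by simpa using hitTime_le_of_mem h) zero_le

lemma hitTime_anti (h : D ⊆ D') : hitTime p D' ≤ hitTime p D :=
  le_iInf₂ fun t ht => hitTime_le_of_mem (h ht)

lemma hitTime_ne_top_iff : hitTime p D ≠ ⊤ ↔ ∃ t, p t ∈ D := by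
  rw [hitTime_eq_dite]
  split_ifs with h <;> simp [h]

lemma hitTime_shift {t : ℕ} (h : ∀ s < t, p s ∉ D) :
    hitTime p D = t + hitTime (fun s => p (t + s)) D := by
  rw [hitTime_eq_dite p D, hitTime_eq_dite (fun s => p (t + s)) D]
  by_cases h1 : ∃ s, p s ∈ D
  case neg =>
    have h2 : ¬ ∃ s, p (t + s) ∈ D := fun ⟨s, hs⟩ => h1 ⟨t + s, hs⟩
    rw [dif_neg h1, dif_neg h2, add_top]
  have h2 : ∃ s, p (t + s) ∈ D := by
    obtain ⟨m, hm⟩ := h1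
    have hge : t ≤ m := by
      by_contra hlt
      exact h _ (by omega) hm
    exact ⟨m - t, by rwa [Nat.add_sub_cancel' hge]⟩
  rw [dif_pos h1, dif_pos h2]
  · rw [← Nat.cast_add, Nat.cast_inj]
    have hfind := Nat.find_spec h1
    have hge : t ≤ Nat.find h1 := by
      by_contra hlt
      exact h _ (by omega) hfind
    refine le_antisymm (Nat.find_min' h1 (Nat.find_spec h2)) ?_
    have : p (t + (Nat.find h1 - t)) ∈ D := by
      rwa [Nat.add_sub_cancel' hge]
    have := Nat.find_min' h2 this
    omega


lemma min_natCast_sum {z : ℝ≥0∞} (hz : z = ⊤ ∨ ∃ m : ℕ, z = m) (n : ℕ) :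
    min z n = ∑ k ∈ Finset.range n, (if (k : ℝ≥0∞) < z then 1 else 0) := by
  induction n with
  | zero => simp
  | succ n ih =>
    rw [Finset.sum_range_succ, ← ih]
    rcases le_or_gt z n with hle | hlt
    · rw [min_eq_left hle, min_eq_left (hle.trans (by exact_mod_cast Nat.cast_le.mpr n.le_succ)),
        if_neg (not_lt.mpr hle), add_zero]
    · have hsucc : ((n + 1 : ℕ) : ℝ≥0∞) ≤ z := by
        rcases hz with rfl | ⟨m, rfl⟩
        · exact le_top
        · exact_mod_cast Nat.cast_lt.mp hlt
      rw [min_eq_right (not_lt.mp (fun hc => absurd (hc.trans_le hsucc) (by simp))),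
        min_eq_right ((by exact_mod_cast Nat.cast_le.mpr n.le_succ : ((n:ℕ):ℝ≥0∞) ≤ ((n+1:ℕ):ℝ≥0∞)).trans hsucc),
        if_pos hlt]
      push_cast
      ring


lemma measurableSet_ctble {α : Type*} [MeasurableSpace α] [Countable α]
    [MeasurableSingletonClass α] (S : Set α) : MeasurableSet S := S.to_countable.measurableSet

lemma measurableSet_G (S : Set (ℤ × ℤ)) : MeasurableSet S := S.to_countable.measurableSet

variable {Ω : Type*} [MeasurableSpace Ω]

lemma measurable_walk {X : ℕ → Ω → ℤ × ℤ} (hX : ∀ j, Measurable (X j)) (x : ℤ × ℤ) (t : ℕ) :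
    Measurable (walk X x t) := by
  induction t with
  | zero =>
    have : walk X x 0 = fun _ => x := by funext ω; simp [walk]
    rw [this]; exact measurable_const
  | succ t ih =>
    have : walk X x (t + 1) = fun ω => walk X x t ω + X t ω := by
      funext ω
      simp [walk, Finset.sum_range_succ, add_assoc]
    rw [this]
    exact (measurable_of_countable (fun q : (ℤ × ℤ) × (ℤ × ℤ) => q.1 + q.2)).comp
      (ih.prodMk (hX t))

lemma hitTime_eq_iInf_ite {V : Type*} (p : ℕ → V) (D : Set V) :
    hitTime p D = ⨅ t : ℕ, (if p t ∈ D then (t : ℝ≥0∞) else ⊤) := by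
  unfold hitTime
  congr 1
  funext t
  by_cases h : p t ∈ D <;> simp [h]

lemma measurable_hitTimeWalk {X : ℕ → Ω → ℤ × ℤ} (hX : ∀ j, Measurable (X j))
    (x : ℤ × ℤ) (C : Set (ℤ × ℤ)) :
    Measurable fun ω => hitTime (fun t => walk X x t ω) C := by
  simp only [hitTime_eq_iInf_ite]
  refine Measurable.iInf fun t => Measurable.ite ?_ measurable_const measurable_const
  exact measurable_walk hX x t (measurableSet_G C)

omit [MeasurableSpace Ω] in
lemma walk_add {X : ℕ → Ω → ℤ × ℤ} (x : ℤ × ℤ) (t s : ℕ) (ω : Ω) :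
    walk X x (t + s) ω = walk (fun j => X (t + j)) (walk X x t ω) s ω := by
  simp [walk, Finset.sum_range_add, add_assoc]


section Indep

/-- extension of a finite tuple by zero -/
def ext0 {k : ℕ} (w : Fin k → ℤ × ℤ) (j : ℕ) : ℤ × ℤ :=
  if h : j < k then w ⟨j, h⟩ else 0

/-- prefix event -/
def pre {Ω : Type*} (X : ℕ → Ω → ℤ × ℤ) (t : ℕ) (v : Fin t → ℤ × ℤ) : Set Ω :=
  {ω | ∀ j : Fin t, X j ω = v j}

/-- shifted tuple -/
def tup {Ω : Type*} (X : ℕ → Ω → ℤ × ℤ) (t k : ℕ) (ω : Ω) : Fin k → ℤ × ℤ :=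
  fun j => X (t + j) ω

variable {X : ℕ → Ω → ℤ × ℤ} {P : Measure Ω} {μ : Measure (ℤ × ℤ)}

lemma measurable_tup (hX : ∀ j, Measurable (X j)) (t k : ℕ) : Measurable (tup X t k) :=
  measurable_pi_lambda _ fun j => hX (t + j)

lemma measurableSet_pre (hX : ∀ j, Measurable (X j)) (t : ℕ) (v : Fin t → ℤ × ℤ) :
    MeasurableSet (pre X t v) := by
  have : pre X t v = ⋂ j : Fin t, X j ⁻¹' {v j} := by
    ext ω; simp [pre, Set.mem_iInter]
  rw [this]
  exact MeasurableSet.iInter fun j => hX j (measurableSet_G _)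

lemma pre_eq_tup (t : ℕ) (v : Fin t → ℤ × ℤ) : pre X t v = tup X 0 t ⁻¹' {v} := by
  ext ω
  simp only [pre, tup, Set.mem_setOf_eq, Set.mem_preimage, Set.mem_singleton_iff, funext_iff]
  constructor
  · intro h j; rw [← h j]; congr 1; omega
  · intro h j; rw [← h j]; congr 1; omega

variable (hX : ∀ j, Measurable (X j))
  (hind : iIndepFun X P)
  (hlaw : ∀ j, Measure.map (X j) P = μ)

include hX hind hlaw

lemma meas_iInter_singleton (S : Finset ℕ) (c : ℕ → ℤ × ℤ) :
    P (⋂ i ∈ S, X i ⁻¹' {c i}) = ∏ i ∈ S, μ {c i} := by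
  rw [hind.measure_inter_preimage_eq_mul S (fun i _ => measurableSet_G _)]
  refine Finset.prod_congr rfl fun i _ => ?_
  rw [← hlaw i, Measure.map_apply (hX i) (measurableSet_G _)]

lemma meas_tup_singleton (t k : ℕ) (w : Fin k → ℤ × ℤ) :
    P (tup X t k ⁻¹' {w}) = ∏ j : Fin k, μ {w j} := by
  have hset : tup X t k ⁻¹' {w}
      = ⋂ i ∈ (Finset.range k).image (t + ·), X i ⁻¹' {ext0 w (i - t)} := by
    ext ω
    simp only [Set.mem_preimage, Set.mem_singleton_iff, funext_iff, Set.mem_iInter,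
      Finset.mem_image, Finset.mem_range]
    constructor
    · rintro h i ⟨j, hj, rfl⟩
      have : t + j - t = j := by omega
      rw [this, ext0, dif_pos hj]
      exact h ⟨j, hj⟩
    · intro h j
      have := h (t + j) ⟨j, j.isLt, rfl⟩
      have h2 : t + (j : ℕ) - t = (j : ℕ) := by omega
      rw [h2, ext0, dif_pos j.isLt] at this
      simpa [tup] using this
  rw [hset, meas_iInter_singleton hX hind hlaw, Finset.prod_image (by intro a _ b _ h; have : t + a = t + b := h; omega)]
  rw [← Fin.prod_univ_eq_prod_range (fun j => μ {ext0 w (t + j - t)}) k]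
  refine Finset.prod_congr rfl fun j _ => ?_
  have h2 : t + (j : ℕ) - t = (j : ℕ) := by omega
  rw [h2, ext0, dif_pos j.isLt]

lemma meas_pre' (t : ℕ) (v : Fin t → ℤ × ℤ) :
    P (pre X t v) = ∏ j : Fin t, μ {v j} := by
  rw [pre_eq_tup, meas_tup_singleton hX hind hlaw]

lemma key_indep_singleton (t k : ℕ) (v : Fin t → ℤ × ℤ) (w : Fin k → ℤ × ℤ) :
    P (pre X t v ∩ tup X t k ⁻¹' {w}) = P (pre X t v) * P (tup X t k ⁻¹' {w}) := by
  classical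
  have hset : pre X t v ∩ tup X t k ⁻¹' {w}
      = ⋂ i ∈ (Finset.range t ∪ (Finset.range k).image (t + ·)),
          X i ⁻¹' {if h : i < t then v ⟨i, h⟩ else ext0 w (i - t)} := by
    ext ω
    simp only [Set.mem_inter_iff, pre, Set.mem_setOf_eq, Set.mem_preimage,
      Set.mem_singleton_iff, funext_iff, Set.mem_iInter, Finset.mem_union,
      Finset.mem_image, Finset.mem_range]
    constructor
    · rintro ⟨h1, h2⟩ i hi
      rcases hi with hi | ⟨j, hj, rfl⟩
      · rw [dif_pos hi]; exact h1 ⟨i, hi⟩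
      · have hnot : ¬ (t + j < t) := by omega
        have h3 : t + j - t = j := by omega
        rw [dif_neg hnot, h3, ext0, dif_pos hj]
        exact h2 ⟨j, hj⟩
    · intro h
      constructor
      · intro j
        have := h j (Or.inl j.isLt)
        rwa [dif_pos j.isLt] at this
      · intro j
        have := h (t + j) (Or.inr ⟨j, j.isLt, rfl⟩)
        have hnot : ¬ (t + (j:ℕ) < t) := by omega
        have h3 : t + (j:ℕ) - t = (j:ℕ) := by omega
        rw [dif_neg hnot, h3, ext0, dif_pos j.isLt] at this
        simpa [tup] using this
  have hdisj : Disjoint (Finset.range t) ((Finset.range k).image (t + ·)) := by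
    rw [Finset.disjoint_left]
    rintro i hi hmem
    obtain ⟨j, hj, rfl⟩ := Finset.mem_image.mp hmem
    simp only [Finset.mem_range] at hi
    omega
  rw [hset, meas_iInter_singleton hX hind hlaw, Finset.prod_union hdisj,
    meas_pre' hX hind hlaw, meas_tup_singleton hX hind hlaw]
  congr 1
  · rw [← Fin.prod_univ_eq_prod_range (fun i => μ {if h : i < t then v ⟨i, h⟩ else ext0 w (i - t)}) t]
    exact Finset.prod_congr rfl fun j _ => by rw [dif_pos j.isLt]
  · rw [Finset.prod_image (by intro a _ b _ h; have : t + a = t + b := h; omega),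
      ← Fin.prod_univ_eq_prod_range (fun j => μ {if h : t + j < t then v ⟨t + j, h⟩ else ext0 w (t + j - t)}) k]
    refine Finset.prod_congr rfl fun j _ => ?_
    have hnot : ¬ (t + (j:ℕ) < t) := by omega
    have h3 : t + (j:ℕ) - t = (j:ℕ) := by omega
    rw [dif_neg hnot, h3, ext0, dif_pos j.isLt]

lemma key_indep (t k : ℕ) (v : Fin t → ℤ × ℤ) (U : Set (Fin k → ℤ × ℤ)) :
    P (pre X t v ∩ tup X t k ⁻¹' U) = P (pre X t v) * P (tup X t k ⁻¹' U) := by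
  have hU : (tup X t k ⁻¹' U) = ⋃ w : U, tup X t k ⁻¹' {(w : Fin k → ℤ × ℤ)} := by
    ext ω
    simp [Set.mem_iUnion]
  have hdist : pre X t v ∩ tup X t k ⁻¹' U = ⋃ w : U, (pre X t v ∩ tup X t k ⁻¹' {(w : Fin k → ℤ × ℤ)}) := by
    rw [hU, Set.inter_iUnion]
  have hmeas : ∀ w : U, MeasurableSet (pre X t v ∩ tup X t k ⁻¹' {(w : Fin k → ℤ × ℤ)}) :=
    fun w => (measurableSet_pre hX t v).inter (measurable_tup hX t k (measurableSet_ctble _))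
  have hdisjall : Pairwise (Function.onFun Disjoint
      fun w : U => pre X t v ∩ tup X t k ⁻¹' {(w : Fin k → ℤ × ℤ)}) := by
    intro w w' hww
    refine Set.disjoint_left.mpr ?_
    rintro ω ⟨-, h1⟩ ⟨-, h2⟩
    simp only [Set.mem_preimage, Set.mem_singleton_iff] at h1 h2
    exact hww (Subtype.ext (h1 ▸ h2 ▸ rfl))
  rw [hdist, measure_iUnion hdisjall hmeas]
  have : ∀ w : U, P (pre X t v ∩ tup X t k ⁻¹' {(w : Fin k → ℤ × ℤ)})
      = P (pre X t v) * P (tup X t k ⁻¹' {(w : Fin k → ℤ × ℤ)}) :=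
    fun w => key_indep_singleton hX hind hlaw t k v w
  rw [tsum_congr this, ENNReal.tsum_mul_left]
  congr 1
  rw [hU, measure_iUnion ?_ (fun w => measurable_tup hX t k (measurableSet_ctble _))]
  intro w w' hww
  refine Set.disjoint_left.mpr ?_
  rintro ω h1 h2
  simp only [Set.mem_preimage, Set.mem_singleton_iff] at h1 h2
  exact hww (Subtype.ext (h1 ▸ h2 ▸ rfl))

lemma tup_law (t k : ℕ) (U : Set (Fin k → ℤ × ℤ)) :
    P (tup X t k ⁻¹' U) = P (tup X 0 k ⁻¹' U) := by
  have key : ∀ t', P (tup X t' k ⁻¹' U) = ∑' w : U, ∏ j : Fin k, μ {(w : Fin k → ℤ × ℤ) j} := by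
    intro t'
    have hU : (tup X t' k ⁻¹' U) = ⋃ w : U, tup X t' k ⁻¹' {(w : Fin k → ℤ × ℤ)} := by
      ext ω; simp [Set.mem_iUnion]
    rw [hU, measure_iUnion ?_ (fun w => measurable_tup hX t' k (measurableSet_ctble _))]
    · exact tsum_congr fun w => meas_tup_singleton hX hind hlaw t' k _
    · intro w w' hww
      refine Set.disjoint_left.mpr ?_
      rintro ω h1 h2
      simp only [Set.mem_preimage, Set.mem_singleton_iff] at h1 h2
      exact hww (Subtype.ext (h1 ▸ h2 ▸ rfl))
  rw [key t, key 0]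


end Indep

section Step

lemma min_add_le (a b c : ℝ≥0∞) : min (a + b) c ≤ a + min b c := by
  rcases le_total b c with h | h
  · rw [min_eq_left h]; exact min_le_left _ _
  · rw [min_eq_right h]; exact (min_le_right _ _).trans le_add_self

def Ucond (k : ℕ) (y : ℤ × ℤ) (C : Set (ℤ × ℤ)) : Set (Fin k → ℤ × ℤ) :=
  {w | ∀ s ≤ k, (y + ∑ j ∈ Finset.range s, ext0 w j) ∉ C}

variable {X : ℕ → Ω → ℤ × ℤ} {P : Measure Ω} {μ : Measure (ℤ × ℤ)}

omit [MeasurableSpace Ω] in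
lemma hit_gt_tup (t k : ℕ) (y : ℤ × ℤ) (C : Set (ℤ × ℤ)) :
    {ω | (k : ℝ≥0∞) < hitTime (fun s => walk (fun j => X (t + j)) y s ω) C}
      = tup X t k ⁻¹' Ucond k y C := by
  ext ω
  rw [Set.mem_setOf_eq, lt_hitTime_iff]
  simp only [Set.mem_preimage, Ucond, Set.mem_setOf_eq]
  have walkeq : ∀ s, s ≤ k → (y + ∑ j ∈ Finset.range s, ext0 (tup X t k ω) j)
      = walk (fun j => X (t + j)) y s ω := by
    intro s hs
    unfold walk
    congr 1
    refine Finset.sum_congr rfl fun j hj => ?_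
    rw [Finset.mem_range] at hj
    have hjk : j < k := lt_of_lt_of_le hj hs
    simp [ext0, tup, hjk]
  constructor
  · intro h s hs
    rw [walkeq s hs]
    exact h s hs
  · intro h s hs
    rw [← walkeq s hs]
    exact h s hs

omit [MeasurableSpace Ω] in
lemma hit_gt_base (k : ℕ) (y : ℤ × ℤ) (C : Set (ℤ × ℤ)) :
    {ω | (k : ℝ≥0∞) < hitTime (fun s => walk X y s ω) C}
      = tup X 0 k ⁻¹' Ucond k y C := by
  have hw : ∀ ω s, walk (fun j => X (0 + j)) y s ω = walk X y s ω := by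
    intro ω s
    unfold walk
    congr 1
    exact Finset.sum_congr rfl fun j _ => by simp
  have h0 : {ω | (k : ℝ≥0∞) < hitTime (fun s => walk X y s ω) C}
      = {ω | (k : ℝ≥0∞) < hitTime (fun s => walk (fun j => X (0 + j)) y s ω) C} := by
    ext ω
    simp only [Set.mem_setOf_eq, hw]
  rw [h0, hit_gt_tup 0 k y C]

lemma Gn_eq_sum (hX : ∀ j, Measurable (X j)) (y : ℤ × ℤ) (C : Set (ℤ × ℤ)) (n : ℕ) :
    ∫⁻ ω, min (hitTime (fun s => walk X y s ω) C) n ∂P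
      = ∑ k ∈ Finset.range n, P {ω | (k : ℝ≥0∞) < hitTime (fun s => walk X y s ω) C} := by
  have hTmeas := measurable_hitTimeWalk hX y C
  rw [lintegral_congr (fun ω =>
    min_natCast_sum (hitTime_cases (fun s => walk X y s ω) C) n)]
  rw [lintegral_finset_sum _ (fun k _ => Measurable.ite
    (measurableSet_lt measurable_const hTmeas) measurable_const measurable_const)]
  refine Finset.sum_congr rfl fun k _ => ?_
  have hset : MeasurableSet {ω | (k : ℝ≥0∞) < hitTime (fun s => walk X y s ω) C} :=
    measurableSet_lt measurable_const hTmeas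
  have : (fun ω => if (k : ℝ≥0∞) < hitTime (fun s => walk X y s ω) C then (1:ℝ≥0∞) else 0)
      = Set.indicator {ω | (k : ℝ≥0∞) < hitTime (fun s => walk X y s ω) C} (fun _ => 1) := by
    funext ω
    rw [Set.indicator_apply]
    rfl
  rw [this, lintegral_indicator hset, setLIntegral_one]


lemma atom_bound [IsProbabilityMeasure P]
    (hX : ∀ j, Measurable (X j))
    (hind : iIndepFun X P)
    (hlaw : ∀ j, Measure.map (X j) P = μ)
    (D C : Set (ℤ × ℤ)) (hCD : C ⊆ D) (x : ℤ × ℤ) (n t : ℕ) (v : Fin t → ℤ × ℤ) :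
    (∫⁻ ω in (pre X t v ∩ {ω | hitTime (fun s => walk X x s ω) D = (t : ℝ≥0∞)}),
        min (hitTime (fun s => walk X x s ω) C) n ∂P)
      ≤ (t : ℝ≥0∞) * P (pre X t v ∩ {ω | hitTime (fun s => walk X x s ω) D = (t : ℝ≥0∞)})
        + P (pre X t v ∩ {ω | hitTime (fun s => walk X x s ω) D = (t : ℝ≥0∞)})
          * ∫⁻ ω, min (hitTime (fun s =>
              walk X (x + ∑ j ∈ Finset.range t, ext0 v j) s ω) C) n ∂P := by
  classical
  set y : ℤ × ℤ := x + ∑ j ∈ Finset.range t, ext0 v j with hy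
  set E : Set Ω := pre X t v ∩ {ω | hitTime (fun s => walk X x s ω) D = (t : ℝ≥0∞)} with hE
  -- the walk is deterministic on the prefix event
  have hwalk_pre : ∀ ω ∈ pre X t v, ∀ s ≤ t,
      walk X x s ω = x + ∑ j ∈ Finset.range s, ext0 v j := by
    intro ω hω s hs
    unfold walk
    congr 1
    refine Finset.sum_congr rfl fun j hj => ?_
    rw [Finset.mem_range] at hj
    have hjt : j < t := lt_of_lt_of_le hj hs
    rw [ext0, dif_pos hjt]
    exact hω ⟨j, hjt⟩
  by_cases hQ : y ∈ D ∧ ∀ s < t, (x + ∑ j ∈ Finset.range s, ext0 v j) ∉ D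
  case neg =>
    have hEempty : E = (∅ : Set Ω) := by
      rw [hE]
      ext ω
      simp only [Set.mem_inter_iff, Set.mem_setOf_eq, Set.mem_empty_iff_false, iff_false,
        not_and]
      intro hpre hhit
      rw [hitTime_eq_natCast_iff] at hhit
      refine hQ ⟨?_, ?_⟩
      · rw [hy, ← hwalk_pre ω hpre t le_rfl]
        exact hhit.1
      · intro s hs hmem
        exact hhit.2 s hs (by rwa [hwalk_pre ω hpre s hs.le])
    rw [hEempty]
    simp
  case pos =>
    have hEpre : E = pre X t v := by
      rw [hE]
      refine Set.inter_eq_left.mpr fun ω hω => ?_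
      rw [Set.mem_setOf_eq, hitTime_eq_natCast_iff]
      refine ⟨by rw [hwalk_pre ω hω t le_rfl]; exact hQ.1, fun s hs => ?_⟩
      rw [hwalk_pre ω hω s hs.le]
      exact hQ.2 s hs
    have hEmeas : MeasurableSet E := by
      rw [hEpre]; exact measurableSet_pre hX t v
    set Xs : ℕ → Ω → ℤ × ℤ := fun j => X (t + j) with hXs
    have hXsm : ∀ j, Measurable (Xs j) := fun j => hX (t + j)
    set Z : Ω → ℝ≥0∞ := fun ω => hitTime (fun s => walk Xs y s ω) C with hZ
    have hZmeas : Measurable Z := measurable_hitTimeWalk hXsm y C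
    -- pointwise bound on E
    have hpoint : ∀ ω ∈ E, min (hitTime (fun s => walk X x s ω) C) n
        ≤ (t : ℝ≥0∞) + min (Z ω) n := by
      intro ω hω
      have hωpre : ω ∈ pre X t v := hEpre ▸ hω
      have hsplit : hitTime (fun s => walk X x s ω) C
          = t + hitTime (fun s => walk X x (t + s) ω) C := by
        refine hitTime_shift fun s hs hmem => ?_
        rw [hwalk_pre ω hωpre s hs.le] at hmem
        exact hQ.2 s hs (hCD hmem)
      have hsh : (fun s => walk X x (t + s) ω) = fun s => walk Xs y s ω := by
        funext s
        rw [walk_add, hwalk_pre ω hωpre t le_rfl]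
      rw [hsplit, hsh]
      exact min_add_le _ _ _
    calc ∫⁻ ω in E, min (hitTime (fun s => walk X x s ω) C) n ∂P
        ≤ ∫⁻ ω in E, ((t : ℝ≥0∞) + min (Z ω) n) ∂P := setLIntegral_mono' hEmeas hpoint
      _ = (t : ℝ≥0∞) * P E + ∫⁻ ω in E, min (Z ω) n ∂P := by
          rw [lintegral_add_left measurable_const, setLIntegral_const]
      _ ≤ (t : ℝ≥0∞) * P E + P E * ∫⁻ ω, min (hitTime (fun s => walk X y s ω) C) n ∂P := by
          gcongr
          -- compute the set integral via independence
          have hcong : ∀ ω, min (Z ω) n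
              = ∑ k ∈ Finset.range n, (if (k : ℝ≥0∞) < Z ω then (1:ℝ≥0∞) else 0) :=
            fun ω => min_natCast_sum (hitTime_cases _ C) n
          rw [lintegral_congr hcong, lintegral_finset_sum _ (fun k _ => Measurable.ite
            (measurableSet_lt measurable_const hZmeas) measurable_const measurable_const)]
          rw [Gn_eq_sum hX y C n, Finset.mul_sum]
          refine Finset.sum_le_sum fun k _ => ?_
          have hsetZ : MeasurableSet {ω | (k : ℝ≥0∞) < Z ω} :=
            measurableSet_lt measurable_const hZmeas
          have hind1 : (fun ω => if (k : ℝ≥0∞) < Z ω then (1:ℝ≥0∞) else 0)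
              = Set.indicator {ω | (k : ℝ≥0∞) < Z ω} (fun _ => 1) := by
            funext ω
            rw [Set.indicator_apply]
            rfl
          rw [hind1, lintegral_indicator hsetZ, setLIntegral_one, Measure.restrict_apply hsetZ]
          have hZU : {ω | (k : ℝ≥0∞) < Z ω} = tup X t k ⁻¹' Ucond k y C := hit_gt_tup t k y C
          have hbase : {ω | (k : ℝ≥0∞) < hitTime (fun s => walk X y s ω) C}
              = tup X 0 k ⁻¹' Ucond k y C := hit_gt_base k y C
          rw [hZU, hEpre, Set.inter_comm,
            key_indep hX hind hlaw t k v (Ucond k y C),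
            tup_law hX hind hlaw t k (Ucond k y C), ← hbase]


lemma step_bound [IsProbabilityMeasure P]
    (hX : ∀ j, Measurable (X j))
    (hind : iIndepFun X P)
    (hlaw : ∀ j, Measure.map (X j) P = μ)
    (B' C : Set (ℤ × ℤ)) (hdisj : Disjoint B' C) (x : ℤ × ℤ)
    (hrecx : ∀ᵐ ω ∂P, ∃ s : ℕ, walk X x s ω ∈ B' ∪ C)
    (n : ℕ) (H : ℝ≥0∞)
    (hH : ∀ b ∈ B', ∫⁻ ω, min (hitTime (fun s => walk X b s ω) C) n ∂P ≤ H) :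
    ∫⁻ ω, min (hitTime (fun s => walk X x s ω) C) n ∂P
      ≤ expHit P X (B' ∪ C) x + excPsi P X B' C x * H := by
  classical
  set D : Set (ℤ × ℤ) := B' ∪ C with hD
  have hCD : C ⊆ D := Set.subset_union_right
  set f : Ω → ℝ≥0∞ := fun ω => min (hitTime (fun s => walk X x s ω) C) n with hf
  set τ : Ω → ℝ≥0∞ := fun ω => hitTime (fun s => walk X x s ω) D with hτ
  have hτmeas : Measurable τ := measurable_hitTimeWalk hX x D
  have hfmeas : Measurable f := (measurable_hitTimeWalk hX x C).min measurable_const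
  set At : ℕ → Set Ω := fun t => {ω | τ ω = (t : ℝ≥0∞)} with hAt
  have hAtmeas : ∀ t, MeasurableSet (At t) := fun t => hτmeas (measurableSet_singleton _)
  have hAtdisj : Pairwise (Function.onFun Disjoint At) := by
    intro t t' htt
    refine Set.disjoint_left.mpr fun ω h1 h2 => ?_
    rw [Set.mem_setOf_eq] at h1 h2
    exact htt (by exact_mod_cast h1 ▸ h2)
  set S : Set Ω := ⋃ t, At t with hS
  have hSmeas : MeasurableSet S := MeasurableSet.iUnion hAtmeas
  have hScompl : P Sᶜ = 0 := by
    have hae : ∀ᵐ ω ∂P, ω ∈ S := by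
      refine hrecx.mono fun ω hω => ?_
      have hne : τ ω ≠ ⊤ := by
        rw [hτ, hitTime_ne_top_iff]
        exact hω
      rcases hitTime_cases (fun s => walk X x s ω) D with h | ⟨m, hm⟩
      · exact absurd h hne
      · exact Set.mem_iUnion.mpr ⟨m, hm⟩
    rw [Set.compl_def]
    exact ae_iff.mp hae
  have hAt_eq : ∀ t, At t = ⋃ v : Fin t → ℤ × ℤ, (pre X t v ∩ At t) := by
    intro t
    ext ω
    simp only [Set.mem_iUnion, Set.mem_inter_iff]
    constructor
    · intro h
      exact ⟨fun j => X j ω, fun j => rfl, h⟩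
    · rintro ⟨v, -, h⟩
      exact h
  have hEmeas : ∀ t (v : Fin t → ℤ × ℤ), MeasurableSet (pre X t v ∩ At t) :=
    fun t v => (measurableSet_pre hX t v).inter (hAtmeas t)
  have hEdisj : ∀ t, Pairwise (Function.onFun Disjoint fun v : Fin t → ℤ × ℤ =>
      pre X t v ∩ At t) := by
    intro t v v' hvv
    refine Set.disjoint_left.mpr fun ω h1 h2 => ?_
    refine hvv (funext fun j => ?_)
    rw [← h1.1 j, ← h2.1 j]
  set exc : Set Ω := {ω | hitTime (fun s => walk X x s ω) B'
      < hitTime (fun s => walk X x s ω) C} with hexc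
  have hexcmeas : MeasurableSet exc :=
    measurableSet_lt (measurable_hitTimeWalk hX x B') (measurable_hitTimeWalk hX x C)
  set y : ∀ t, (Fin t → ℤ × ℤ) → ℤ × ℤ :=
    fun t v => x + ∑ j ∈ Finset.range t, ext0 v j with hy
  set Gn : ℤ × ℤ → ℝ≥0∞ :=
    fun z => ∫⁻ ω, min (hitTime (fun s => walk X z s ω) C) n ∂P with hGn
  -- per-atom facts
  have hwalk_pre : ∀ t (v : Fin t → ℤ × ℤ), ∀ ω ∈ pre X t v, ∀ s ≤ t,
      walk X x s ω = x + ∑ j ∈ Finset.range s, ext0 v j := by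
    intro t v ω hω s hs
    unfold walk
    congr 1
    refine Finset.sum_congr rfl fun j hj => ?_
    rw [Finset.mem_range] at hj
    have hjt : j < t := lt_of_lt_of_le hj hs
    rw [ext0, dif_pos hjt]
    exact hω ⟨j, hjt⟩
  have hatom2 : ∀ t (v : Fin t → ℤ × ℤ),
      P (pre X t v ∩ At t) * Gn (y t v) ≤ P ((pre X t v ∩ At t) ∩ exc) * H := by
    intro t v
    by_cases hyB : y t v ∈ B'
    · have hsub : pre X t v ∩ At t ⊆ exc := by
        rintro ω ⟨hpre, hAtω⟩
        rw [Set.mem_setOf_eq] at hAtω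
        rw [hitTime_eq_natCast_iff] at hAtω
        have hBle : hitTime (fun s => walk X x s ω) B' ≤ (t : ℝ≥0∞) := by
          refine hitTime_le_of_mem ?_
          rw [hwalk_pre t v ω hpre t le_rfl]
          exact hyB
        have hCgt : (t : ℝ≥0∞) < hitTime (fun s => walk X x s ω) C := by
          rw [lt_hitTime_iff]
          intro s hs hmem
          rcases lt_or_eq_of_le hs with hlt | heq
          · exact hAtω.2 s hlt (hCD hmem)
          · rw [heq, hwalk_pre t v ω hpre t le_rfl] at hmem
            exact Set.disjoint_left.mp hdisj hyB hmem
        exact lt_of_le_of_lt hBle hCgt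
      have : (pre X t v ∩ At t) ∩ exc = pre X t v ∩ At t :=
        Set.inter_eq_left.mpr hsub
      rw [this]
      exact mul_le_mul' le_rfl (hH _ hyB)
    · by_cases hyC : y t v ∈ C
      · have hGn0 : Gn (y t v) = 0 := by
          rw [hGn]
          have : ∀ ω, min (hitTime (fun s => walk X (y t v) s ω) C) (n : ℝ≥0∞) = 0 := by
            intro ω
            have h0 : walk X (y t v) 0 ω = y t v := by simp [walk]
            rw [hitTime_zero (by rw [h0]; exact hyC)]
            simp
          simp only [this, lintegral_zero]
        rw [hGn0, mul_zero]
        exact zero_le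
      · have hEempty : pre X t v ∩ At t = ∅ := by
          ext ω
          simp only [Set.mem_inter_iff, Set.mem_empty_iff_false, iff_false, not_and]
          intro hpre hAtω
          rw [Set.mem_setOf_eq, hitTime_eq_natCast_iff] at hAtω
          have := hAtω.1
          rw [hwalk_pre t v ω hpre t le_rfl] at this
          rcases this with h | h
          · exact hyB h
          · exact hyC h
        rw [hEempty]
        simp
  -- main chain
  have hmain : ∫⁻ ω, f ω ∂P
      = ∑' t : ℕ, ∑' v : Fin t → ℤ × ℤ, ∫⁻ ω in pre X t v ∩ At t, f ω ∂P := by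
    rw [← lintegral_add_compl f hSmeas, setLIntegral_measure_zero _ _ hScompl, add_zero,
      hS, lintegral_iUnion hAtmeas hAtdisj]
    refine tsum_congr fun t => ?_
    calc ∫⁻ a in At t, f a ∂P
        = ∫⁻ a in ⋃ v : Fin t → ℤ × ℤ, (pre X t v ∩ At t), f a ∂P := by
          conv_lhs => rw [hAt_eq t]
      _ = ∑' v : Fin t → ℤ × ℤ, ∫⁻ a in pre X t v ∩ At t, f a ∂P :=
          lintegral_iUnion (fun v => hEmeas t v) (hEdisj t) f
  have hsumA : ∑' t : ℕ, ∑' v : Fin t → ℤ × ℤ, (t : ℝ≥0∞) * P (pre X t v ∩ At t)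
      ≤ expHit P X D x := by
    have h1 : ∀ t : ℕ, ∑' v : Fin t → ℤ × ℤ, (t : ℝ≥0∞) * P (pre X t v ∩ At t)
        = (t : ℝ≥0∞) * P (At t) := by
      intro t
      rw [ENNReal.tsum_mul_left]
      congr 1
      rw [← measure_iUnion (hEdisj t) (hEmeas t), ← hAt_eq t]
    rw [tsum_congr h1]
    have h2 : ∀ t : ℕ, (t : ℝ≥0∞) * P (At t) = ∫⁻ ω in At t, τ ω ∂P := by
      intro t
      rw [setLIntegral_congr_fun (hAtmeas t) (fun ω hω => hω),
        setLIntegral_const]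
    rw [tsum_congr h2, ← lintegral_iUnion hAtmeas hAtdisj τ]
    exact (setLIntegral_le_lintegral _ _).trans (le_of_eq rfl)
  have hsumB : ∑' t : ℕ, ∑' v : Fin t → ℤ × ℤ, P (pre X t v ∩ At t) * Gn (y t v)
      ≤ excPsi P X B' C x * H := by
    calc ∑' t : ℕ, ∑' v : Fin t → ℤ × ℤ, P (pre X t v ∩ At t) * Gn (y t v)
        ≤ ∑' t : ℕ, ∑' v : Fin t → ℤ × ℤ, P ((pre X t v ∩ At t) ∩ exc) * H :=
          ENNReal.tsum_le_tsum fun t => ENNReal.tsum_le_tsum fun v => hatom2 t v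
      _ = (∑' t : ℕ, ∑' v : Fin t → ℤ × ℤ, P ((pre X t v ∩ At t) ∩ exc)) * H := by
          rw [← ENNReal.tsum_mul_right]
          exact tsum_congr fun t => by rw [← ENNReal.tsum_mul_right]
      _ ≤ P exc * H := by
          refine mul_le_mul' ?_ le_rfl
          have h3 : ∀ t : ℕ, ∑' v : Fin t → ℤ × ℤ, P ((pre X t v ∩ At t) ∩ exc)
              = P (At t ∩ exc) := by
            intro t
            rw [← measure_iUnion (fun v v' hvv => ((hEdisj t) hvv).mono
              Set.inter_subset_left Set.inter_subset_left)
              (fun v => (hEmeas t v).inter hexcmeas), ← Set.iUnion_inter, ← hAt_eq t]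
          rw [tsum_congr h3, ← measure_iUnion (fun t t' htt => (hAtdisj htt).mono
            Set.inter_subset_left Set.inter_subset_left)
            (fun t => (hAtmeas t).inter hexcmeas), ← Set.iUnion_inter]
          exact measure_mono Set.inter_subset_right
      _ = excPsi P X B' C x * H := rfl
  calc ∫⁻ ω, f ω ∂P
      = ∑' t : ℕ, ∑' v : Fin t → ℤ × ℤ, ∫⁻ ω in pre X t v ∩ At t, f ω ∂P := hmain
    _ ≤ ∑' t : ℕ, ∑' v : Fin t → ℤ × ℤ,
        ((t : ℝ≥0∞) * P (pre X t v ∩ At t) + P (pre X t v ∩ At t) * Gn (y t v)) := by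
        refine ENNReal.tsum_le_tsum fun t => ENNReal.tsum_le_tsum fun v => ?_
        exact atom_bound hX hind hlaw D C hCD x n t v
    _ = (∑' t : ℕ, ∑' v : Fin t → ℤ × ℤ, (t : ℝ≥0∞) * P (pre X t v ∩ At t))
        + ∑' t : ℕ, ∑' v : Fin t → ℤ × ℤ, P (pre X t v ∩ At t) * Gn (y t v) := by
        rw [← ENNReal.tsum_add]
        exact tsum_congr fun t => by rw [← ENNReal.tsum_add]
    _ ≤ expHit P X D x + excPsi P X B' C x * H := add_le_add hsumA hsumB

end Step


lemma iSup_min_natCast (x : ℝ≥0∞) : ⨆ n : ℕ, min x n = x := by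
  refine le_antisymm (iSup_le fun n => min_le_left _ _) ?_
  rcases eq_or_ne x ⊤ with rfl | hx
  · calc (⊤ : ℝ≥0∞) = ⨆ n : ℕ, (n : ℝ≥0∞) := ENNReal.iSup_natCast.symm
      _ ≤ ⨆ n : ℕ, min ⊤ (n : ℝ≥0∞) := iSup_mono fun n => by simp
  · obtain ⟨n, hn⟩ := ENNReal.exists_nat_gt hx
    calc x = min x n := (min_eq_left hn.le).symm
      _ ≤ ⨆ n : ℕ, min x n := le_iSup (fun n : ℕ => min x (n : ℝ≥0∞)) n

end HT

open HT

/-- Excursion hitting-time bound: for a recurrent walk and a partition `A ⊔ B ⊔ C` of `ℤ²`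
into nonempty sets, with `f_A = sup_{a∈A} E^a(T_{B∪C})`, `f_B = sup_{b∈B} E^b(T_{A∪C})`,
`ψ = sup_{a∈A} P^a(T_B < T_C)`, `σ = sup_{b∈B} P^b(T_A < T_C)`, assuming `f_A, f_B < ∞` and
`ψσ < 1`: for every `a ∈ A`,
`E^a(T_{B∪C}) ≤ E^a(T_C) ≤ E^a(T_{B∪C}) + ψ_a (f_B + σ f_A)/(1 − ψσ)`. -/
theorem excursion_hitting_time_bound {Ω : Type*} [MeasurableSpace Ω] (P : Measure Ω)
    [IsProbabilityMeasure P] (X : ℕ → Ω → ℤ × ℤ) (hX : ∀ j, Measurable (X j))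
    (μ : Measure (ℤ × ℤ)) [IsProbabilityMeasure μ]
    (hind : iIndepFun X P)
    (hlaw : ∀ j, Measure.map (X j) P = μ)
    (hrec : ∀ x y : ℤ × ℤ, ∀ᵐ ω ∂P, ∃ t : ℕ, walk X x t ω = y)
    (A B C : Set (ℤ × ℤ)) (hA : A.Nonempty) (hB : B.Nonempty) (hC : C.Nonempty)
    (hcover : A ∪ B ∪ C = Set.univ)
    (hAB : Disjoint A B) (hAC : Disjoint A C) (hBC : Disjoint B C)
    (hfA : (⨆ a : A, expHit P X (B ∪ C) (a : ℤ × ℤ)) < ⊤)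
    (hfB : (⨆ b : B, expHit P X (A ∪ C) (b : ℤ × ℤ)) < ⊤)
    (hψσ : (⨆ a : A, excPsi P X B C (a : ℤ × ℤ)) *
        (⨆ b : B, excPsi P X A C (b : ℤ × ℤ)) < 1)
    (a : ℤ × ℤ) (ha : a ∈ A) :
    expHit P X (B ∪ C) a ≤ expHit P X C a ∧
    expHit P X C a ≤
      expHit P X (B ∪ C) a +
        excPsi P X B C a *
          ((⨆ b : B, expHit P X (A ∪ C) (b : ℤ × ℤ)) +
            (⨆ b : B, excPsi P X A C (b : ℤ × ℤ)) *
              (⨆ a' : A, expHit P X (B ∪ C) (a' : ℤ × ℤ))) /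
          (1 - (⨆ a' : A, excPsi P X B C (a' : ℤ × ℤ)) *
            (⨆ b : B, excPsi P X A C (b : ℤ × ℤ))) := by
  classical
  obtain ⟨c, hc⟩ := hC
  constructor
  · exact lintegral_mono fun ω => hitTime_anti Set.subset_union_right
  set ψ : ℝ≥0∞ := ⨆ a' : A, excPsi P X B C (a' : ℤ × ℤ) with hψ
  set σ' : ℝ≥0∞ := ⨆ b : B, excPsi P X A C (b : ℤ × ℤ) with hσ
  set fA : ℝ≥0∞ := ⨆ a' : A, expHit P X (B ∪ C) (a' : ℤ × ℤ) with hfAdef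
  set fB : ℝ≥0∞ := ⨆ b : B, expHit P X (A ∪ C) (b : ℤ × ℤ) with hfBdef
  set K : ℝ≥0∞ := fB + σ' * fA with hK
  set r : ℝ≥0∞ := ψ * σ' with hr
  have hrlt : r < 1 := hψσ
  have hrne : (1 : ℝ≥0∞) - r ≠ 0 := by
    intro h
    rw [tsub_eq_zero_iff_le] at h
    exact absurd hrlt (not_lt.mpr h)
  have hrnetop : (1 : ℝ≥0∞) - r ≠ ⊤ := by
    intro h
    exact (tsub_le_self.trans_lt (lt_of_le_of_ne le_top (fun hh => ENNReal.one_ne_top hh))).ne h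
  -- truncated expected hitting times
  set Gn : ℕ → ℤ × ℤ → ℝ≥0∞ := fun n z =>
    ∫⁻ ω, min (hitTime (fun s => walk X z s ω) C) n ∂P with hGn
  have hGnle : ∀ n z, Gn n z ≤ (n : ℝ≥0∞) := by
    intro n z
    calc Gn n z ≤ ∫⁻ _, (n : ℝ≥0∞) ∂P := lintegral_mono fun ω => min_le_right _ _
      _ = n := by simp
  set GA : ℕ → ℝ≥0∞ := fun n => ⨆ a' : A, Gn n (a' : ℤ × ℤ) with hGA
  set GB : ℕ → ℝ≥0∞ := fun n => ⨆ b : B, Gn n (b : ℤ × ℤ) with hGB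
  have hrecx : ∀ (x : ℤ × ℤ) (D : Set (ℤ × ℤ)), c ∈ D → (∀ᵐ ω ∂P, ∃ s, walk X x s ω ∈ D) := by
    intro x D hcD
    exact (hrec x c).mono fun ω ⟨t, ht⟩ => ⟨t, by rw [ht]; exact hcD⟩
  have hstepA : ∀ n, ∀ a' ∈ A, Gn n a' ≤ expHit P X (B ∪ C) a' + excPsi P X B C a' * GB n := by
    intro n a' _
    exact step_bound hX hind hlaw B C hBC a'
      (hrecx a' (B ∪ C) (Or.inr hc)) n (GB n)
      (fun b hb => le_iSup (fun b : B => Gn n (b : ℤ × ℤ)) ⟨b, hb⟩)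
  have hstepB : ∀ n, ∀ b ∈ B, Gn n b ≤ expHit P X (A ∪ C) b + excPsi P X A C b * GA n := by
    intro n b _
    exact step_bound hX hind hlaw A C hAC b
      (hrecx b (A ∪ C) (Or.inr hc)) n (GA n)
      (fun a'' ha'' => le_iSup (fun a'' : A => Gn n (a'' : ℤ × ℤ)) ⟨a'', ha''⟩)
  have hGAle : ∀ n, GA n ≤ fA + ψ * GB n := by
    intro n
    refine iSup_le fun a' => ?_
    calc Gn n a' ≤ expHit P X (B ∪ C) a' + excPsi P X B C a' * GB n := hstepA n a' a'.2
      _ ≤ fA + ψ * GB n := by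
          gcongr
          · exact le_iSup (fun a'' : A => expHit P X (B ∪ C) (a'' : ℤ × ℤ)) a'
          · exact le_iSup (fun a'' : A => excPsi P X B C (a'' : ℤ × ℤ)) a'
  have hGBle : ∀ n, GB n ≤ fB + σ' * GA n := by
    intro n
    refine iSup_le fun b => ?_
    calc Gn n b ≤ expHit P X (A ∪ C) b + excPsi P X A C b * GA n := hstepB n b b.2
      _ ≤ fB + σ' * GA n := by
          gcongr
          · exact le_iSup (fun b' : B => expHit P X (A ∪ C) (b' : ℤ × ℤ)) b
          · exact le_iSup (fun b' : B => excPsi P X A C (b' : ℤ × ℤ)) b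
  have hGBbound : ∀ n, GB n ≤ K / (1 - r) := by
    intro n
    have hGBne : GB n ≠ ⊤ := by
      refine ne_top_of_le_ne_top (ENNReal.natCast_ne_top n) (iSup_le fun b => hGnle n b)
    have hiter : GB n ≤ K + r * GB n := by
      calc GB n ≤ fB + σ' * (fA + ψ * GB n) := by
            refine (hGBle n).trans ?_
            gcongr
            exact hGAle n
        _ = fB + σ' * fA + σ' * (ψ * GB n) := by rw [mul_add, ← add_assoc]
        _ = K + r * GB n := by rw [hK, hr]; ring_nf
    have hsub : GB n * (1 - r) ≤ K := by
      have hdecomp : GB n * r + GB n * (1 - r) = GB n := by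
        rw [← mul_add, add_tsub_cancel_of_le hrlt.le, mul_one]
      have hrGBne : GB n * r ≠ ⊤ :=
        ENNReal.mul_ne_top hGBne (hrlt.trans ENNReal.one_lt_top).ne
      have : GB n * (1 - r) + GB n * r ≤ K + GB n * r := by
        rw [add_comm (GB n * (1 - r)) (GB n * r), hdecomp]
        calc GB n ≤ K + r * GB n := hiter
          _ = K + GB n * r := by rw [mul_comm]
      exact (ENNReal.add_le_add_iff_right hrGBne).mp this
    rw [ENNReal.le_div_iff_mul_le (Or.inl hrne) (Or.inl hrnetop)]
    exact hsub
  -- pass to the limit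
  have hsup : expHit P X C a = ⨆ n : ℕ, Gn n a := by
    rw [expHit]
    have hfun : (fun ω => hitTime (fun s => walk X a s ω) C)
        = fun ω => ⨆ n : ℕ, min (hitTime (fun s => walk X a s ω) C) n := by
      funext ω
      rw [iSup_min_natCast]
    rw [hfun, lintegral_iSup]
    · exact fun n => (measurable_hitTimeWalk hX a C).min measurable_const
    · intro n m hnm ω
      exact min_le_min le_rfl (by exact_mod_cast Nat.cast_le.mpr hnm)
  have hfinal : expHit P X C a ≤ expHit P X (B ∪ C) a + excPsi P X B C a * (K / (1 - r)) := by
    rw [hsup]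
    refine iSup_le fun n => ?_
    calc Gn n a ≤ expHit P X (B ∪ C) a + excPsi P X B C a * GB n := hstepA n a ha
      _ ≤ expHit P X (B ∪ C) a + excPsi P X B C a * (K / (1 - r)) := by
          gcongr
          exact hGBbound n
  calc expHit P X C a ≤ expHit P X (B ∪ C) a + excPsi P X B C a * (K / (1 - r)) := hfinal
    _ = expHit P X (B ∪ C) a + excPsi P X B C a * K / (1 - r) := by rw [mul_div_assoc]


end
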